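/- For nonzero elements a, b ∈ K, the following are equivalent: (1) there exist a unit u of D and irreducible elements π₁, …, πₙ and ξ₁, …, ξₘ of D (with n, m ≥ 0, empty products allowed) such that a/b = u·(π₁⋯πₙ)/(ξ₁⋯ξₘ); (2) there exists a finite sequence of nonzero elements x₀, x₁, …, xₖ of K (k ≥ 0) with x₀D = aD and xₖD = bD as fractional ideals, such that for each 1 ≤ i ≤ k either xᵢ₋₁/xᵢ or xᵢ/xᵢ₋₁ is an irreducible element of D. -/

import Mathlib

/-- A weak path connecting `a` to `b` in the graph of divisibility: a finite sequence
`x 0, x 1, …, x k` of nonzero elements of `K` with `x 0 • D = a • D` and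
`x k • D = b • D` as fractional ideals, such that each consecutive quotient
`x (i-1) / x i` or `x i / x (i-1)` is an irreducible element of `D`. -/
def WeakPath (D : Type*) {K : Type*} [CommRing D] [Field K] [Algebra D K]
    (a b : K) : Prop :=
  ∃ (k : ℕ) (x : ℕ → K), (∀ i ≤ k, x i ≠ 0) ∧
    Submodule.span D {x 0} = Submodule.span D {a} ∧
    Submodule.span D {x k} = Submodule.span D {b} ∧
    ∀ i, 1 ≤ i → i ≤ k →
      (∃ π : D, Irreducible π ∧ x (i - 1) / x i = algebraMap D K π) ∨
      (∃ π : D, Irreducible π ∧ x i / x (i - 1) = algebraMap D K π)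

section Aux

variable {D K : Type*} [CommRing D] [IsDomain D] [Field K] [Algebra D K] [IsFractionRing D K]

/-- The "connected" relation from the statement. -/
def WPRel (D : Type*) {K : Type*} [CommRing D] [Field K] [Algebra D K] (a b : K) : Prop :=
  ∃ (u : Dˣ) (l₁ l₂ : List D), (∀ p ∈ l₁, Irreducible p) ∧ (∀ p ∈ l₂, Irreducible p) ∧
    a / b = algebraMap D K (↑u * l₁.prod) / algebraMap D K l₂.prod

lemma myWP_map_ne_zero {d : D} (hd : d ≠ 0) : algebraMap D K d ≠ 0 :=
  (map_ne_zero_iff _ (IsFractionRing.injective D K)).mpr hd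

lemma myWP_unit_map_ne_zero (u : Dˣ) : algebraMap D K ↑u ≠ 0 :=
  myWP_map_ne_zero u.ne_zero

lemma myWP_prod_ne_zero {l : List D} (hl : ∀ p ∈ l, Irreducible p) :
    algebraMap D K l.prod ≠ 0 := by
  apply myWP_map_ne_zero
  apply List.prod_ne_zero
  intro h0
  exact (hl 0 h0).ne_zero rfl

lemma myWP_span_unit {x y : K} (hx : x ≠ 0)
    (h : Submodule.span D {x} = Submodule.span D {y}) :
    ∃ u : Dˣ, x = algebraMap D K ↑u * y := by
  have h1 : x ∈ Submodule.span D {y} := h ▸ Submodule.mem_span_singleton_self x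
  obtain ⟨d, hd⟩ := Submodule.mem_span_singleton.mp h1
  have h2 : y ∈ Submodule.span D {x} := h ▸ Submodule.mem_span_singleton_self y
  obtain ⟨e, he⟩ := Submodule.mem_span_singleton.mp h2
  have key : algebraMap D K (d * e) * x = x := by
    rw [map_mul, mul_assoc, ← Algebra.smul_def e x, he, ← Algebra.smul_def d y, hd]
  have hde : d * e = 1 := by
    apply IsFractionRing.injective D K
    rw [map_one]
    exact mul_right_cancel₀ hx (by rw [key, one_mul])
  exact ⟨Units.mkOfMulEqOne d e hde, by rw [← hd, Algebra.smul_def]; rfl⟩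

lemma myWP_span_mul_unit (u : Dˣ) (v : K) :
    Submodule.span D {v * algebraMap D K ↑u} = Submodule.span D {v} := by
  apply le_antisymm <;> rw [Submodule.span_le, Set.singleton_subset_iff] <;>
    rw [SetLike.mem_coe, Submodule.mem_span_singleton]
  · exact ⟨↑u, by rw [Algebra.smul_def, mul_comm]⟩
  · refine ⟨↑u⁻¹, ?_⟩
    rw [Algebra.smul_def, mul_comm v, ← mul_assoc, ← map_mul, u.inv_mul, map_one, one_mul]

lemma myWP_rel_refl {a : K} (ha : a ≠ 0) : WPRel D a a := by
  refine ⟨1, [], [], by simp, by simp, ?_⟩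
  simp [div_self ha]

lemma myWP_rel_step {a c b : K} (hb : b ≠ 0) (hc : c ≠ 0) (hr : WPRel D a c)
    (h : (∃ π : D, Irreducible π ∧ c / b = algebraMap D K π) ∨
      (∃ π : D, Irreducible π ∧ b / c = algebraMap D K π)) : WPRel D a b := by
  obtain ⟨u, l₁, l₂, h₁, h₂, he⟩ := hr
  rcases h with ⟨π, hπ, hq⟩ | ⟨π, hπ, hq⟩
  · refine ⟨u, π :: l₁, l₂, ?_, h₂, ?_⟩
    · intro p hp
      rw [List.mem_cons] at hp
      rcases hp with hp | hp
      · exact hp ▸ hπ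
      · exact h₁ p hp
    · have key : a / b = (a / c) * (c / b) := by
        field_simp
      rw [key, he, hq, List.prod_cons, map_mul, map_mul, map_mul]
      ring
  · refine ⟨u, l₁, π :: l₂, h₁, ?_, ?_⟩
    · intro p hp
      rw [List.mem_cons] at hp
      rcases hp with hp | hp
      · exact hp ▸ hπ
      · exact h₂ p hp
    · have hbc : b / c ≠ 0 := div_ne_zero hb hc
      have key : a / b = (a / c) / (b / c) := by
        field_simp
      rw [key, he, hq, List.prod_cons, map_mul, map_mul]
      ring
  
lemma myWP_rel_congr {a b a' b' : K} (ha' : a' ≠ 0) (hb : b ≠ 0) (hb' : b' ≠ 0)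
    (h : WPRel D a b)
    (ea : Submodule.span D {a'} = Submodule.span D ({a} : Set K))
    (eb : Submodule.span D {b'} = Submodule.span D ({b} : Set K)) : WPRel D a' b' := by
  obtain ⟨u, l₁, l₂, h₁, h₂, he⟩ := h
  obtain ⟨u₁, hu₁⟩ := myWP_span_unit ha' ea
  obtain ⟨u₂, hu₂⟩ := myWP_span_unit hb' eb
  refine ⟨u₁ * u₂⁻¹ * u, l₁, l₂, h₁, h₂, ?_⟩
  have hU2 : algebraMap D K ↑u₂ ≠ 0 := myWP_unit_map_ne_zero u₂
  have hinv : algebraMap D K ↑u₂⁻¹ = (algebraMap D K ↑u₂)⁻¹ := by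
    apply eq_inv_of_mul_eq_one_left
    rw [← map_mul, u₂.inv_mul, map_one]
  have key : a' / b' = algebraMap D K ↑u₁ / algebraMap D K ↑u₂ * (a / b) := by
    rw [hu₁, hu₂, div_mul_div_comm]
  rw [key, he]
  simp only [Units.val_mul, map_mul, hinv]
  field_simp

lemma myWP_rel_of_path (k : ℕ) (x : ℕ → K) (hx : ∀ i ≤ k, x i ≠ 0)
    (hs : ∀ i, 1 ≤ i → i ≤ k →
      (∃ π : D, Irreducible π ∧ x (i - 1) / x i = algebraMap D K π) ∨
      (∃ π : D, Irreducible π ∧ x i / x (i - 1) = algebraMap D K π)) :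
    WPRel D (x 0) (x k) := by
  induction k with
  | zero => exact myWP_rel_refl (hx 0 le_rfl)
  | succ k ih =>
    have hr : WPRel D (x 0) (x k) :=
      ih (fun i hi => hx i (by omega)) (fun i h1 h2 => hs i h1 (by omega))
    have hstep := hs (k + 1) (by omega) le_rfl
    simp only [Nat.add_sub_cancel] at hstep
    exact myWP_rel_step (hx (k + 1) le_rfl) (hx k (by omega)) hr hstep

lemma myWP_refl {a : K} (ha : a ≠ 0) : WeakPath D a a :=
  ⟨0, fun _ => a, fun _ _ => ha, rfl, rfl, fun i h1 h2 => by omega⟩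

lemma myWP_symm {a b : K} (h : WeakPath D a b) : WeakPath D b a := by
  obtain ⟨k, x, hx, h0, hk, hs⟩ := h
  refine ⟨k, fun i => x (k - i), fun i hi => hx (k - i) (by omega), by simpa using hk,
    by simpa using h0, ?_⟩
  intro i h1 h2
  beta_reduce
  have e1 : k - (i - 1) = (k - i) + 1 := by omega
  rw [e1]
  have := hs (k - i + 1) (by omega) (by omega)
  simp only [Nat.add_sub_cancel] at this
  exact this.symm

lemma myWP_trans {a b c : K} (h1 : WeakPath D a b) (h2 : WeakPath D b c) :
    WeakPath D a c := by
  obtain ⟨k₁, x₁, hx₁, h10, h1k, hs₁⟩ := h1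
  obtain ⟨k₂, x₂, hx₂, h20, h2k, hs₂⟩ := h2
  have hb1 : x₁ k₁ ≠ 0 := hx₁ k₁ le_rfl
  obtain ⟨u, hu⟩ := myWP_span_unit hb1 (h1k.trans h20.symm)
  refine ⟨k₁ + k₂, fun i => if i ≤ k₁ then x₁ i else x₂ (i - k₁), ?_, ?_, ?_, ?_⟩
  · intro i hi
    beta_reduce
    by_cases h : i ≤ k₁
    · rw [if_pos h]; exact hx₁ i h
    · rw [if_neg h]; exact hx₂ (i - k₁) (by omega)
  · beta_reduce
    rw [if_pos (Nat.zero_le k₁)]; exact h10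
  · beta_reduce
    by_cases hk2 : k₂ = 0
    · subst hk2
      rw [if_pos (by omega)]
      exact h1k.trans (h20.symm.trans h2k)
    · rw [if_neg (by omega), show k₁ + k₂ - k₁ = k₂ from by omega]
      exact h2k
  · intro i hi1 hi2
    beta_reduce
    by_cases hi : i ≤ k₁
    · rw [if_pos (by omega : i - 1 ≤ k₁), if_pos hi]
      exact hs₁ i hi1 hi
    · by_cases hj : i = k₁ + 1
      · subst hj
        rw [show k₁ + 1 - 1 = k₁ from by omega, if_pos le_rfl, if_neg (by omega),
          show k₁ + 1 - k₁ = 1 from by omega]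
        have hstep := hs₂ 1 le_rfl (by omega)
        simp only [Nat.sub_self] at hstep
        rcases hstep with ⟨π, hπ, hq⟩ | ⟨π, hπ, hq⟩
        · refine Or.inl ⟨↑u * π, Associated.irreducible ⟨u, mul_comm _ _⟩ hπ, ?_⟩
          rw [hu, map_mul, mul_div_assoc, hq]
        · refine Or.inr ⟨↑u⁻¹ * π, Associated.irreducible ⟨u⁻¹, mul_comm _ _⟩ hπ, ?_⟩
          have hU : algebraMap D K ↑u ≠ 0 := myWP_unit_map_ne_zero u
          have hx20 : x₂ 0 ≠ 0 := hx₂ 0 (Nat.zero_le _)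
          have hinv : algebraMap D K ↑u⁻¹ = (algebraMap D K ↑u)⁻¹ := by
            apply eq_inv_of_mul_eq_one_left
            rw [← map_mul, u.inv_mul, map_one]
          rw [hu, map_mul, hinv, ← hq]
          field_simp
      · rw [if_neg (by omega : ¬ i - 1 ≤ k₁), if_neg hi]
        have := hs₂ (i - k₁) (by omega) (by omega)
        rw [show i - k₁ - 1 = i - 1 - k₁ from by omega] at this
        exact this

lemma myWP_single {c : K} (hc : c ≠ 0) {π : D} (hπ : Irreducible π) :
    WeakPath D c (c * algebraMap D K π) := by
  have hπ0 : algebraMap D K π ≠ 0 := myWP_map_ne_zero hπ.ne_zero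
  refine ⟨1, fun i => if i = 0 then c else c * algebraMap D K π, ?_, by simp, by simp, ?_⟩
  · intro i hi
    beta_reduce
    by_cases h : i = 0
    · rw [if_pos h]; exact hc
    · rw [if_neg h]; exact mul_ne_zero hc hπ0
  · intro i h1 h2
    interval_cases i
    beta_reduce
    refine Or.inr ⟨π, hπ, ?_⟩
    rw [if_neg one_ne_zero, if_pos rfl, mul_comm, mul_div_assoc, div_self hc, mul_one]

lemma myWP_mul_prod {c : K} (hc : c ≠ 0) (l : List D) (hl : ∀ p ∈ l, Irreducible p) :
    WeakPath D c (c * algebraMap D K l.prod) := by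
  induction l generalizing c with
  | nil => simpa using myWP_refl hc
  | cons p t ih =>
    have hp : Irreducible p := hl p List.mem_cons_self
    have hp0 : algebraMap D K p ≠ 0 := myWP_map_ne_zero hp.ne_zero
    have step : WeakPath D c (c * algebraMap D K p) := myWP_single hc hp
    have rest : WeakPath D (c * algebraMap D K p)
        (c * algebraMap D K p * algebraMap D K t.prod) :=
      ih (mul_ne_zero hc hp0) (fun q hq => hl q (List.mem_cons_of_mem p hq))
    have := myWP_trans step rest
    rwa [mul_assoc, ← map_mul, ← List.prod_cons] at this

lemma myWP_congr {a b a' b' : K} (h : WeakPath D a b)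
    (ea : Submodule.span D ({a} : Set K) = Submodule.span D ({a'} : Set K))
    (eb : Submodule.span D ({b} : Set K) = Submodule.span D ({b'} : Set K)) :
    WeakPath D a' b' := by
  obtain ⟨k, x, hx, h0, hk, hs⟩ := h
  exact ⟨k, x, hx, h0.trans ea, hk.trans eb, hs⟩

end Aux

/-- For nonzero `a b : K`, `a / b = u • (π₁⋯πₙ)/(ξ₁⋯ξₘ)` for some unit `u` of `D` and
irreducibles `πᵢ, ξᵢ` of `D` iff there is a finite weak path connecting `a` to `b`. -/
theorem connected_iff_weak_path
    (D K : Type*) [CommRing D] [IsDomain D] [Field K] [Algebra D K] [IsFractionRing D K]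
    (a b : K) (ha : a ≠ 0) (hb : b ≠ 0) :
    (∃ (u : Dˣ) (l₁ l₂ : List D), (∀ p ∈ l₁, Irreducible p) ∧ (∀ p ∈ l₂, Irreducible p) ∧
        a / b = algebraMap D K (↑u * l₁.prod) / algebraMap D K l₂.prod) ↔
      WeakPath D a b := by
  constructor
  · rintro ⟨u, l₁, l₂, h₁, h₂, he⟩
    have hQ : algebraMap D K l₂.prod ≠ 0 := myWP_prod_ne_zero h₂
    have hU : algebraMap D K ↑u ≠ 0 := myWP_unit_map_ne_zero u
    have key : a * algebraMap D K l₂.prod =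
        b * (algebraMap D K ↑u * algebraMap D K l₁.prod) := by
      have := (div_eq_div_iff hb hQ).mp he
      rw [this, map_mul]; ring
    have P1 : WeakPath D a (a * algebraMap D K l₂.prod) := myWP_mul_prod ha l₂ h₂
    have P2 : WeakPath D (b * algebraMap D K ↑u)
        (b * algebraMap D K ↑u * algebraMap D K l₁.prod) :=
      myWP_mul_prod (mul_ne_zero hb hU) l₁ h₁
    rw [mul_assoc, ← key] at P2
    have P3 : WeakPath D a (b * algebraMap D K ↑u) := myWP_trans P1 (myWP_symm P2)
    exact myWP_congr P3 rfl (myWP_span_mul_unit u b)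
  · rintro ⟨k, x, hx, h0, hk, hs⟩
    have hr : WPRel D (x 0) (x k) := myWP_rel_of_path k x hx hs
    exact myWP_rel_congr ha (hx k le_rfl) hb hr h0.symm hk.symm
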